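/- Let E be a finite set, Q an E×E matrix, and P a determinantal probability measure with kernel Q (i.e., P[A ⊆ 𝔄] = det(Q↾A) for all A). Then for disjoint A₁, A₂ ⊆ E: P[A₁ ⊆ 𝔄 and A₂ ∩ 𝔄 = ∅] = det of the (A₁∪A₂)×(A₁∪A₂) matrix whose rows indexed by A₁ come from Q and whose rows indexed by A₂ come from I − Q. -/

import Mathlib

open Finset

/-- Determinant of a matrix on `↥T` whose rows in `u` come from `Q` and whose other rows are
identity rows equals the determinant of `Q` restricted to `u`. -/
lemma det_partial {E : Type*} [Fintype E] [DecidableEq E] (Q : Matrix E E ℝ)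
    (T u : Finset E) (hu : u ⊆ T) :
    (Matrix.of fun i j : ↥T =>
        if (i : E) ∈ u then Q (i : E) (j : E)
        else if (i : E) = (j : E) then (1:ℝ) else 0).det
      = (Q.submatrix (fun a : u => (a : E)) (fun a : u => (a : E))).det := by
  classical
  set P : ↥T → Prop := fun i => (i : E) ∈ u with hP
  rw [← Matrix.det_submatrix_equiv_self (Equiv.sumCompl P)]
  have hblocks : (Matrix.of fun i j : ↥T =>
        if (i : E) ∈ u then Q (i : E) (j : E)
        else if (i : E) = (j : E) then (1:ℝ) else 0).submatrix (Equiv.sumCompl P) (Equiv.sumCompl P)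
      = Matrix.fromBlocks
          (Matrix.of fun i j : {i : ↥T // P i} => Q ((i : ↥T) : E) ((j : ↥T) : E))
          (Matrix.of fun (i : {i : ↥T // P i}) (j : {i : ↥T // ¬ P i}) => Q ((i : ↥T) : E) ((j : ↥T) : E))
          0 1 := by
    ext i j
    rcases i with i | i <;> rcases j with j | j
    · have hi : ((i : ↥T) : E) ∈ u := i.2
      simp [Matrix.fromBlocks, hi]
    · have hi : ((i : ↥T) : E) ∈ u := i.2
      simp [Matrix.fromBlocks, hi]
    · have hi : ((i : ↥T) : E) ∉ u := i.2
      have hj : ((j : ↥T) : E) ∈ u := j.2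
      have hne : ((i : ↥T) : E) ≠ ((j : ↥T) : E) := fun h => hi (h ▸ hj)
      have hne' : (i : ↥T) ≠ (j : ↥T) := fun h => hne (congrArg Subtype.val h)
      simp [Matrix.fromBlocks, hi, hne, hne']
    · have hi : ((i : ↥T) : E) ∉ u := i.2
      have hiff : (((i : ↥T) : E) = ((j : ↥T) : E)) ↔ i = j :=
        ⟨fun h => Subtype.ext (Subtype.ext h), fun h => by rw [h]⟩
      have hiff' : ((i : ↥T) = (j : ↥T)) ↔ i = j := ⟨fun h => Subtype.ext h, fun h => by rw [h]⟩
      simp [Matrix.fromBlocks, Matrix.one_apply, hi, hiff, hiff']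
  rw [hblocks, Matrix.det_fromBlocks_zero₂₁, Matrix.det_one, mul_one]
  rw [← Matrix.det_submatrix_equiv_self
    (⟨fun x => ⟨⟨(x : E), hu x.2⟩, x.2⟩, fun i => ⟨((i : ↥T) : E), i.2⟩,
      fun x => rfl, fun i => rfl⟩ : u ≃ {i : ↥T // P i})]
  congr 1

/-- Multilinear expansion of the determinant appearing in `stmt5`. -/
lemma aux2 {E : Type*} [Fintype E] [DecidableEq E] (Q : Matrix E E ℝ)
    (A₁ A₂ : Finset E) (hdisj : Disjoint A₁ A₂) :
    (Matrix.of fun i j : ↑(A₁ ∪ A₂) =>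
        if (i : E) ∈ A₁ then Q (i : E) (j : E)
        else (if (i : E) = (j : E) then (1:ℝ) else 0) - Q (i : E) (j : E)).det
      = ∑ s ∈ A₂.powerset, (-1 : ℝ) ^ s.card
          * (Q.submatrix (fun a : ↑(A₁ ∪ s) => (a : E)) (fun a : ↑(A₁ ∪ s) => (a : E))).det := by
  classical
  set q : ↥(A₁ ∪ A₂) → ↥(A₁ ∪ A₂) → ℝ := fun i j => Q (i : E) (j : E) with hq
  set e : ↥(A₁ ∪ A₂) → ↥(A₁ ∪ A₂) → ℝ := fun i j => if (i : E) = (j : E) then (1:ℝ) else 0 with he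
  set a : ↥(A₁ ∪ A₂) → ↥(A₁ ∪ A₂) → ℝ := fun i => if (i : E) ∈ A₁ then q i else e i with ha
  set b : ↥(A₁ ∪ A₂) → ↥(A₁ ∪ A₂) → ℝ := fun i => if (i : E) ∈ A₁ then 0 else -(q i) with hb
  have hM : (Matrix.of fun i j : ↑(A₁ ∪ A₂) =>
        if (i : E) ∈ A₁ then Q (i : E) (j : E)
        else (if (i : E) = (j : E) then (1:ℝ) else 0) - Q (i : E) (j : E)) = b + a := by
    funext i j
    by_cases h : (i : E) ∈ A₁ <;>
      simp [ha, hb, hq, he, h, Matrix.of_apply, sub_eq_neg_add]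
  rw [hM]
  have expand : Matrix.det (b + a)
      = ∑ S : Finset ↥(A₁ ∪ A₂), Matrix.det (S.piecewise b a) :=
    MultilinearMap.map_add_univ
      (Matrix.detRowAlternating (R := ℝ) (n := ↥(A₁ ∪ A₂))).toMultilinearMap b a
  rw [expand]
  set T₂ : Finset ↥(A₁ ∪ A₂) := Finset.univ.filter (fun i => (i : E) ∈ A₂) with hT₂
  have hz : ∀ S ∈ (Finset.univ : Finset (Finset ↥(A₁ ∪ A₂))), S ∉ T₂.powerset →
      Matrix.det (S.piecewise b a) = 0 := by
    intro S _ hS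
    rw [Finset.mem_powerset] at hS
    obtain ⟨i, hiS, hi⟩ := Finset.not_subset.mp hS
    apply Matrix.det_eq_zero_of_row_eq_zero i
    intro j
    have hiA₁ : (i : E) ∈ A₁ := by
      have h2 := i.2
      rw [Finset.mem_union] at h2
      rcases h2 with h | h
      · exact h
      · exact absurd (by simp [hT₂, h]) hi
    simp [Finset.piecewise_eq_of_mem _ _ _ hiS, hb, hiA₁]
  rw [← Finset.sum_subset (Finset.subset_univ T₂.powerset) hz]
  refine Finset.sum_nbij'
    (fun S : Finset ↥(A₁ ∪ A₂) => S.image (fun i : ↥(A₁ ∪ A₂) => (i : E)))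
    (fun s : Finset E => T₂.filter (fun i => (i : E) ∈ s)) ?_ ?_ ?_ ?_ ?_
  · intro S hS
    rw [Finset.mem_powerset] at hS ⊢
    intro x hx
    rw [Finset.mem_image] at hx
    obtain ⟨i, hiS, rfl⟩ := hx
    have := hS hiS
    rw [hT₂, Finset.mem_filter] at this
    exact this.2
  · intro s _
    rw [Finset.mem_powerset]
    exact Finset.filter_subset _ _
  · intro S hS
    rw [Finset.mem_powerset] at hS
    ext i
    simp only [Finset.mem_filter, Finset.mem_image]
    constructor
    · rintro ⟨-, i', hi', h⟩
      rwa [show i' = i from Subtype.ext h] at hi'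
    · intro hi
      exact ⟨hS hi, i, hi, rfl⟩
  · intro s hs
    rw [Finset.mem_powerset] at hs
    ext x
    simp only [Finset.mem_image, Finset.mem_filter]
    constructor
    · rintro ⟨i, ⟨-, hix⟩, rfl⟩
      exact hix
    · intro hx
      refine ⟨⟨x, Finset.mem_union_right _ (hs hx)⟩, ⟨?_, hx⟩, rfl⟩
      rw [hT₂, Finset.mem_filter]
      exact ⟨Finset.mem_univ _, hs hx⟩
  · intro S hS
    rw [Finset.mem_powerset] at hS
    have hSA₁ : ∀ i ∈ S, (i : E) ∉ A₁ := by
      intro i hi hA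
      have hA2 : (i : E) ∈ A₂ := by
        have := hS hi
        rw [hT₂, Finset.mem_filter] at this
        exact this.2
      exact Finset.disjoint_left.mp hdisj hA hA2
    have hpw : S.piecewise b a
        = S.piecewise (fun i => (-1 : ℝ) • (S.piecewise q a) i) (S.piecewise q a) := by
      funext i
      by_cases hi : i ∈ S
      · rw [Finset.piecewise_eq_of_mem _ _ _ hi, Finset.piecewise_eq_of_mem _ _ _ hi,
          Finset.piecewise_eq_of_mem _ _ _ hi]
        simp [hb, hSA₁ i hi]
      · simp [Finset.piecewise_eq_of_notMem _ _ _ hi]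
    have hsmul : Matrix.det (S.piecewise b a)
        = ((-1 : ℝ) ^ S.card) * Matrix.det (S.piecewise q a) := by
      rw [hpw]
      calc Matrix.det (S.piecewise (fun i => (-1 : ℝ) • (S.piecewise q a) i) (S.piecewise q a))
          = (∏ _i ∈ S, (-1 : ℝ)) • Matrix.det (S.piecewise q a) :=
            MultilinearMap.map_piecewise_smul
              (Matrix.detRowAlternating (R := ℝ) (n := ↥(A₁ ∪ A₂))).toMultilinearMap
              (fun _ => (-1 : ℝ)) (S.piecewise q a) S
        _ = ((-1 : ℝ) ^ S.card) * Matrix.det (S.piecewise q a) := by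
            rw [Finset.prod_const, smul_eq_mul]
    rw [hsmul, Finset.card_image_of_injective S Subtype.coe_injective]
    congr 1
    have hmat : (S.piecewise q a : Matrix ↥(A₁ ∪ A₂) ↥(A₁ ∪ A₂) ℝ)
        = Matrix.of fun i j : ↥(A₁ ∪ A₂) =>
            if (i : E) ∈ A₁ ∪ (S.image (fun i : ↥(A₁ ∪ A₂) => (i : E))) then Q (i : E) (j : E)
            else if (i : E) = (j : E) then (1:ℝ) else 0 := by
      funext i j
      by_cases hi : i ∈ S
      · rw [Finset.piecewise_eq_of_mem _ _ _ hi]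
        have h3 : (i : E) ∈ A₁ ∪ (S.image (fun i : ↥(A₁ ∪ A₂) => (i : E))) :=
          Finset.mem_union_right _ (Finset.mem_image_of_mem _ hi)
        rw [Matrix.of_apply, if_pos h3]
      · rw [Finset.piecewise_eq_of_notMem _ _ _ hi]
        by_cases hA : (i : E) ∈ A₁
        · have h3 : (i : E) ∈ A₁ ∪ (S.image (fun i : ↥(A₁ ∪ A₂) => (i : E))) :=
            Finset.mem_union_left _ hA
          rw [Matrix.of_apply, if_pos h3]
          simp only [ha]
          rw [if_pos hA]
        · have h3 : (i : E) ∉ A₁ ∪ (S.image (fun i : ↥(A₁ ∪ A₂) => (i : E))) := by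
            rw [Finset.mem_union]
            rintro (h | h)
            · exact hA h
            · rw [Finset.mem_image] at h
              obtain ⟨i', hi', h⟩ := h
              exact hi (by rwa [show i' = i from Subtype.ext h] at hi')
          rw [Matrix.of_apply, if_neg h3]
          simp only [ha]
          rw [if_neg hA]
    rw [hmat]
    have himg : A₁ ∪ (S.image (fun i : ↥(A₁ ∪ A₂) => (i : E))) ⊆ A₁ ∪ A₂ := by
      apply Finset.union_subset (Finset.subset_union_left)
      intro x hx
      rw [Finset.mem_image] at hx
      obtain ⟨i, hiS, rfl⟩ := hx
      have := hS hiS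
      rw [hT₂, Finset.mem_filter] at this
      exact Finset.mem_union_right _ this.2
    exact det_partial Q (A₁ ∪ A₂) (A₁ ∪ (S.image (fun i : ↥(A₁ ∪ A₂) => (i : E)))) himg

/-- For a determinantal probability measure with kernel `Q` and disjoint `A₁, A₂ ⊆ E`,
`P[A₁ ⊆ 𝔄, A₂ ∩ 𝔄 = ∅]` equals the determinant of the `(A₁∪A₂)×(A₁∪A₂)` matrix whose
rows indexed by `A₁` come from `Q` and whose rows indexed by `A₂` come from `I − Q`. -/
theorem stmt5 {E : Type*} [Fintype E] [DecidableEq E] (Q : Matrix E E ℝ)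
    (p : Finset E → ℝ)
    (h0 : ∀ B, 0 ≤ p B) (h1 : ∑ B : Finset E, p B = 1)
    (hd : ∀ A : Finset E, ∑ B ∈ Finset.univ.filter (fun B => A ⊆ B), p B
      = (Q.submatrix (fun a : A => (a : E)) (fun a : A => (a : E))).det)
    (A₁ A₂ : Finset E) (hdisj : Disjoint A₁ A₂) :
    ∑ B ∈ Finset.univ.filter (fun B => A₁ ⊆ B ∧ Disjoint A₂ B), p B
      = (Matrix.of fun i j : ↑(A₁ ∪ A₂) =>
          if (i : E) ∈ A₁ then Q (i : E) (j : E)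
          else (if (i : E) = (j : E) then (1:ℝ) else 0) - Q (i : E) (j : E)).det := by
  classical
  rw [aux2 Q A₁ A₂ hdisj]
  have key : ∀ s : Finset E,
      (Q.submatrix (fun a : ↑(A₁ ∪ s) => (a : E)) (fun a : ↑(A₁ ∪ s) => (a : E))).det
        = ∑ B : Finset E, if A₁ ∪ s ⊆ B then p B else 0 := by
    intro s
    rw [← hd (A₁ ∪ s), Finset.sum_filter]
  calc ∑ B ∈ Finset.univ.filter (fun B => A₁ ⊆ B ∧ Disjoint A₂ B), p B
      = ∑ B : Finset E, if A₁ ⊆ B ∧ Disjoint A₂ B then p B else 0 := by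
        rw [Finset.sum_filter]
    _ = ∑ B : Finset E, ∑ s ∈ A₂.powerset,
          (-1 : ℝ) ^ s.card * (if A₁ ∪ s ⊆ B then p B else 0) := by
        refine Finset.sum_congr rfl fun B _ => ?_
        by_cases hA1 : A₁ ⊆ B
        · have h2 : ∀ s : Finset E, (A₁ ∪ s ⊆ B) ↔ s ⊆ B := by
            intro s
            rw [Finset.union_subset_iff]
            exact ⟨fun h => h.2, fun h => ⟨hA1, h⟩⟩
          have hps : A₂.powerset.filter (fun s => s ⊆ B) = (A₂ ∩ B).powerset := by
            ext s
            rw [Finset.mem_filter, Finset.mem_powerset, Finset.mem_powerset,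
              Finset.subset_inter_iff]
          have hsum : ∑ s ∈ A₂.powerset, (-1 : ℝ) ^ s.card * (if A₁ ∪ s ⊆ B then p B else 0)
              = (∑ s ∈ (A₂ ∩ B).powerset, (-1 : ℝ) ^ s.card) * p B := by
            rw [Finset.sum_mul, ← hps, Finset.sum_filter]
            refine Finset.sum_congr rfl fun s _ => ?_
            by_cases hsB : s ⊆ B
            · rw [if_pos ((h2 s).mpr hsB), if_pos hsB]
            · rw [if_neg (fun h => hsB ((h2 s).mp h)), if_neg hsB, mul_zero]
          have hpow : (∑ s ∈ (A₂ ∩ B).powerset, (-1 : ℝ) ^ s.card)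
              = if A₂ ∩ B = ∅ then 1 else 0 := by
            exact_mod_cast Finset.sum_powerset_neg_one_pow_card (x := A₂ ∩ B)
          rw [hsum, hpow]
          by_cases hD : Disjoint A₂ B
          · have h3 : A₂ ∩ B = ∅ := Finset.disjoint_iff_inter_eq_empty.mp hD
            simp [hA1, hD, h3]
          · have h3 : A₂ ∩ B ≠ ∅ := fun h => hD (Finset.disjoint_iff_inter_eq_empty.mpr h)
            simp [hD, h3]
        · have hz : ∀ s ∈ A₂.powerset,
              (-1 : ℝ) ^ s.card * (if A₁ ∪ s ⊆ B then p B else 0) = 0 := by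
            intro s _
            rw [if_neg (fun h => hA1 (Finset.union_subset_iff.mp h).1), mul_zero]
          rw [Finset.sum_eq_zero hz, if_neg (fun h => hA1 h.1)]
    _ = ∑ s ∈ A₂.powerset, ∑ B : Finset E,
          (-1 : ℝ) ^ s.card * (if A₁ ∪ s ⊆ B then p B else 0) := Finset.sum_comm
    _ = ∑ s ∈ A₂.powerset, (-1 : ℝ) ^ s.card
          * (Q.submatrix (fun a : ↑(A₁ ∪ s) => (a : E)) (fun a : ↑(A₁ ∪ s) => (a : E))).det := by
        refine Finset.sum_congr rfl fun s _ => ?_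
        rw [key s, Finset.mul_sum]
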